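/- If x₁ is a differentiable real function on a nonempty open interval I satisfying x₁'(t)² = 1 + x₁(t)² for all t ∈ I, then there exists c ∈ ℝ such that either x₁(t) = sinh(t + c) for all t ∈ I, or x₁(t) = −sinh(t + c) for all t ∈ I. -/

import Mathlib

open Set

/-- The nontrivial solutions of `1 + x₁² − (x₁')² = 0` are `x₁(t) = ± sinh(t + c)`. -/
theorem stmt_4 (a b : ℝ) (hab : a < b) (x₁ : ℝ → ℝ)
    (hdiff : DifferentiableOn ℝ x₁ (Ioo a b))
    (hode : ∀ t ∈ Ioo a b, deriv x₁ t ^ 2 = 1 + x₁ t ^ 2) :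
    ∃ c : ℝ, (∀ t ∈ Ioo a b, x₁ t = Real.sinh (t + c)) ∨
      (∀ t ∈ Ioo a b, x₁ t = -Real.sinh (t + c)) := by
  have hdAt : ∀ t ∈ Ioo a b, DifferentiableAt ℝ x₁ t := fun t ht =>
    (hdiff t ht).differentiableAt (isOpen_Ioo.mem_nhds ht)
  have hD : ∀ t ∈ Ioo a b, HasDerivAt x₁ (deriv x₁ t) t := fun t ht => (hdAt t ht).hasDerivAt
  have hne : ∀ t ∈ Ioo a b, deriv x₁ t ≠ 0 := by
    intro t ht h0
    have := hode t ht
    nlinarith [sq_nonneg (x₁ t)]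
  have ht₀ : (a + b) / 2 ∈ Ioo a b := ⟨by linarith, by linarith⟩
  set t₀ := (a + b) / 2
  -- the sign of the derivative is constant by Darboux
  have hsign : (∀ t ∈ Ioo a b, 0 < deriv x₁ t) ∨ (∀ t ∈ Ioo a b, deriv x₁ t < 0) := by
    have himg : OrdConnected (deriv x₁ '' Ioo a b) :=
      ((convex_Ioo a b).image_deriv hdAt).ordConnected
    rcases lt_or_gt_of_ne (hne t₀ ht₀) with h0 | h0
    · right
      intro t ht
      by_contra h
      push_neg at h
      have h' : 0 < deriv x₁ t := lt_of_le_of_ne h (Ne.symm (hne t ht))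
      have : (0 : ℝ) ∈ deriv x₁ '' Ioo a b :=
        himg.out (mem_image_of_mem _ ht₀) (mem_image_of_mem _ ht) ⟨h0.le, h'.le⟩
      obtain ⟨s, hs, hs0⟩ := this
      exact hne s hs hs0
    · left
      intro t ht
      by_contra h
      push_neg at h
      have h' : deriv x₁ t < 0 := lt_of_le_of_ne h (hne t ht)
      have : (0 : ℝ) ∈ deriv x₁ '' Ioo a b :=
        himg.out (mem_image_of_mem _ ht) (mem_image_of_mem _ ht₀) ⟨h'.le, h0.le⟩
      obtain ⟨s, hs, hs0⟩ := this
      exact hne s hs hs0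
  have hsqrt_pos : ∀ t : ℝ, (0:ℝ) < Real.sqrt (1 + x₁ t ^ 2) := by
    intro t
    apply Real.sqrt_pos.2
    nlinarith [sq_nonneg (x₁ t)]
  rcases hsign with hpos | hneg
  · -- deriv x₁ t = √(1 + x₁ t ^ 2)
    have hval : ∀ t ∈ Ioo a b, deriv x₁ t = Real.sqrt (1 + x₁ t ^ 2) := by
      intro t ht
      rw [← hode t ht, Real.sqrt_sq (hpos t ht).le]
    set g : ℝ → ℝ := fun t => Real.arsinh (x₁ t) - t with hg
    have hgd : ∀ t ∈ Ioo a b, HasDerivAt g 0 t := by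
      intro t ht
      have h1 : HasDerivAt (fun s => Real.arsinh (x₁ s))
          ((Real.sqrt (1 + x₁ t ^ 2))⁻¹ * deriv x₁ t) t :=
        (Real.hasDerivAt_arsinh (x₁ t)).comp t (hD t ht)
      have h2 := h1.sub (hasDerivAt_id t)
      have : (Real.sqrt (1 + x₁ t ^ 2))⁻¹ * deriv x₁ t - 1 = 0 := by
        rw [hval t ht, inv_mul_cancel₀ (hsqrt_pos t).ne']
        ring
      rw [this] at h2
      exact h2
    have hgdiff : DifferentiableOn ℝ g (Ioo a b) := fun t ht =>
      ((hgd t ht).differentiableAt).differentiableWithinAt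
    have hfd : ∀ t ∈ Ioo a b, fderivWithin ℝ g (Ioo a b) t = 0 := by
      intro t ht
      rw [fderivWithin_of_isOpen isOpen_Ioo ht, (hgd t ht).hasFDerivAt.fderiv]
      ext s
      simp
    refine ⟨g t₀, Or.inl fun t ht => ?_⟩
    have hconst : g t = g t₀ :=
      (convex_Ioo a b).is_const_of_fderivWithin_eq_zero hgdiff hfd ht ht₀
    have : Real.arsinh (x₁ t) = t + g t₀ := by
      simp only [hg] at hconst ⊢
      linarith
    calc x₁ t = Real.sinh (Real.arsinh (x₁ t)) := (Real.sinh_arsinh _).symm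
    _ = Real.sinh (t + g t₀) := by rw [this]
  · -- deriv x₁ t = -√(1 + x₁ t ^ 2)
    have hval : ∀ t ∈ Ioo a b, deriv x₁ t = -Real.sqrt (1 + x₁ t ^ 2) := by
      intro t ht
      have : Real.sqrt (1 + x₁ t ^ 2) = -deriv x₁ t := by
        rw [← hode t ht, ← Real.sqrt_sq (neg_nonneg.2 (hneg t ht).le), neg_pow]
        norm_num
      linarith
    set g : ℝ → ℝ := fun t => Real.arsinh (x₁ t) + t with hg
    have hgd : ∀ t ∈ Ioo a b, HasDerivAt g 0 t := by
      intro t ht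
      have h1 : HasDerivAt (fun s => Real.arsinh (x₁ s))
          ((Real.sqrt (1 + x₁ t ^ 2))⁻¹ * deriv x₁ t) t :=
        (Real.hasDerivAt_arsinh (x₁ t)).comp t (hD t ht)
      have h2 := h1.add (hasDerivAt_id t)
      have : (Real.sqrt (1 + x₁ t ^ 2))⁻¹ * deriv x₁ t + 1 = 0 := by
        rw [hval t ht]
        field_simp
        norm_num
      rw [this] at h2
      exact h2
    have hgdiff : DifferentiableOn ℝ g (Ioo a b) := fun t ht =>
      ((hgd t ht).differentiableAt).differentiableWithinAt
    have hfd : ∀ t ∈ Ioo a b, fderivWithin ℝ g (Ioo a b) t = 0 := by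
      intro t ht
      rw [fderivWithin_of_isOpen isOpen_Ioo ht, (hgd t ht).hasFDerivAt.fderiv]
      ext s
      simp
    refine ⟨-g t₀, Or.inr fun t ht => ?_⟩
    have hconst : g t = g t₀ :=
      (convex_Ioo a b).is_const_of_fderivWithin_eq_zero hgdiff hfd ht ht₀
    have harsinh : Real.arsinh (x₁ t) = -(t + -g t₀) := by
      simp only [hg] at hconst ⊢
      linarith
    calc x₁ t = Real.sinh (Real.arsinh (x₁ t)) := (Real.sinh_arsinh _).symm
    _ = Real.sinh (-(t + -g t₀)) := by rw [harsinh]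
    _ = -Real.sinh (t + -g t₀) := Real.sinh_neg _
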